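/- Let m ≥ 1 and let M ⊆ ℂ^m be a domain (open connected set) containing 0, and let 𝔻 = {z ∈ ℂ : |z| < 1} be the open unit disc. Let h : M × 𝔻 → ℂ be holomorphic jointly in (λ, z), and assume h(λ, 0) = 0 for every λ ∈ M. Let (λ_k) be a sequence in M with λ_k → 0, and let (ε_k) be a sequence of positive reals with ε_k → 0. For each k, let U_k denote the connected component containing 0 of the set {z ∈ 𝔻 : h(λ_k, z) ∈ D(0, ε_k)}, where D(0, ε_k) = {w ∈ ℂ : |w| < ε_k}. Then there exists a constant c > 0 such that for all sufficiently large k, the disc D(0, c·ε_k) is contained in U_k. -/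

import Mathlib

open Filter Metric

/-- Let `M ⊆ ℂ^m` be a domain containing `0` and let `h : M × 𝔻 → ℂ` be holomorphic
with `h(λ, 0) = 0` for all `λ ∈ M`. If `λ_k → 0` in `M` and `ε_k > 0` with
`ε_k → 0`, and `U_k` is the connected component containing `0` of
`{z ∈ 𝔻 : h(λ_k, z) ∈ D(0, ε_k)}`, then there exists `c > 0` such that for all
sufficiently large `k`, `D(0, c * ε_k) ⊆ U_k`. -/
theorem disk_in_component_of_preimage
    (m : ℕ) (hm : 1 ≤ m)
    (M : Set (Fin m → ℂ)) (hMopen : IsOpen M) (hMconn : IsConnected M)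
    (h0M : (0 : Fin m → ℂ) ∈ M)
    (h : (Fin m → ℂ) × ℂ → ℂ)
    (hhol : DifferentiableOn ℂ h (M ×ˢ ball (0 : ℂ) 1))
    (hfix : ∀ lam ∈ M, h (lam, 0) = 0)
    (lam : ℕ → (Fin m → ℂ)) (hlamM : ∀ k, lam k ∈ M)
    (hlamlim : Tendsto lam atTop (nhds 0))
    (eps : ℕ → ℝ) (hepspos : ∀ k, 0 < eps k)
    (hepslim : Tendsto eps atTop (nhds 0)) :
    ∃ c > (0 : ℝ), ∀ᶠ k in atTop,
      ball (0 : ℂ) (c * eps k) ⊆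
        connectedComponentIn
          {z : ℂ | z ∈ ball (0 : ℂ) 1 ∧ h (lam k, z) ∈ ball (0 : ℂ) (eps k)} 0 := by
  set U : Set ((Fin m → ℂ) × ℂ) := M ×ˢ ball (0 : ℂ) 1 with hU
  have hUopen : IsOpen U := hMopen.prod isOpen_ball
  have h00 : ((0 : Fin m → ℂ), (0 : ℂ)) ∈ U := ⟨h0M, by simp⟩
  -- find r with closed ball of radius r inside U and r < 1
  obtain ⟨r0, hr0, hball⟩ := Metric.isOpen_iff.1 hUopen _ h00
  set r : ℝ := min (r0 / 2) (1 / 2) with hrdef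
  have hrpos : 0 < r := lt_min (by linarith) (by norm_num)
  have hrlt1 : r < 1 := lt_of_le_of_lt (min_le_right _ _) (by norm_num)
  set K : Set ((Fin m → ℂ) × ℂ) := closedBall ((0 : Fin m → ℂ), (0 : ℂ)) r with hK
  have hKU : K ⊆ U := by
    refine subset_trans (closedBall_subset_ball ?_) hball
    exact lt_of_le_of_lt (min_le_left _ _) (by linarith)
  -- bound ‖h‖ on the compact set K
  obtain ⟨A, hA⟩ := (isCompact_closedBall _ _).exists_bound_of_continuousOn
    ((hhol.continuousOn).mono hKU)
  have hA0 : 0 ≤ A := le_trans (norm_nonneg _) (hA _ (mem_closedBall_self hrpos.le))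
  set C : ℝ := (A + 1) / r with hCdef
  have hCpos : 0 < C := by positivity
  set c : ℝ := 1 / (2 * C) with hc
  have hcpos : 0 < c := by positivity
  refine ⟨c, hcpos, ?_⟩
  have hev1 : ∀ᶠ k in atTop, lam k ∈ ball (0 : Fin m → ℂ) r :=
    hlamlim.eventually (ball_mem_nhds 0 hrpos)
  have hev2 : ∀ᶠ k in atTop, eps k ∈ ball (0 : ℝ) (r * (2 * C)) :=
    hepslim.eventually (ball_mem_nhds 0 (by positivity))
  filter_upwards [hev1, hev2] with k hk1 hk2
  have hlamr : ‖lam k‖ < r := by simpa using hk1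
  have hepsr : eps k < r * (2 * C) := by
    have := mem_ball_zero_iff.1 hk2
    rwa [Real.norm_eq_abs, abs_of_pos (hepspos k)] at this
  have hce : c * eps k ≤ r := by
    rw [hc, div_mul_eq_mul_div, div_le_iff₀ (by positivity)]
    linarith
  -- the slice map is differentiable on ball 0 r and bounded there
  have hmemK : ∀ z : ℂ, ‖z‖ ≤ r → (lam k, z) ∈ K := by
    intro z hz
    rw [hK, mem_closedBall, Prod.dist_eq]
    simp only [dist_zero_right]
    exact max_le hlamr.le hz
  have hdiff : DifferentiableOn ℂ (fun z => h (lam k, z)) (ball (0 : ℂ) r) := by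
    apply hhol.comp (f := fun z : ℂ => ((lam k, z) : (Fin m → ℂ) × ℂ))
    · exact ((differentiable_const _).prodMk differentiable_id).differentiableOn
    · intro z hz
      exact ⟨hlamM k, mem_ball_zero_iff.2 (lt_trans (mem_ball_zero_iff.1 hz) hrlt1)⟩
  have hmaps : Set.MapsTo (fun z => h (lam k, z)) (ball (0 : ℂ) r)
      (ball (h (lam k, 0)) (A + 1)) := by
    intro z hz
    rw [hfix _ (hlamM k)]
    rw [mem_ball_zero_iff]
    exact lt_of_le_of_lt (hA _ (hmemK z (mem_ball_zero_iff.1 hz).le)) (by linarith)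
  -- key pointwise estimate via Schwarz lemma
  have hlip : ∀ z ∈ ball (0 : ℂ) r, ‖h (lam k, z)‖ ≤ C * ‖z‖ := by
    intro z hz
    have := Complex.dist_le_div_mul_dist_of_mapsTo_ball hdiff (hmaps.mono_right ball_subset_closedBall) hz
    rw [hfix _ (hlamM k)] at this
    simpa [dist_zero_right, hCdef] using this
  -- the small ball is contained in the set
  have hsub : ball (0 : ℂ) (c * eps k) ⊆
      {z : ℂ | z ∈ ball (0 : ℂ) 1 ∧ h (lam k, z) ∈ ball (0 : ℂ) (eps k)} := by
    intro z hz
    have hzn : ‖z‖ < c * eps k := mem_ball_zero_iff.1 hz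
    have hzr : ‖z‖ < r := lt_of_lt_of_le hzn hce
    refine ⟨mem_ball_zero_iff.2 (lt_trans hzr hrlt1), ?_⟩
    rw [mem_ball_zero_iff]
    calc ‖h (lam k, z)‖ ≤ C * ‖z‖ := hlip z (mem_ball_zero_iff.2 hzr)
      _ ≤ C * (c * eps k) := mul_le_mul_of_nonneg_left hzn.le hCpos.le
      _ < eps k := by
          rw [hc]
          have : C * (1 / (2 * C) * eps k) = eps k / 2 := by
            field_simp
          rw [this]
          linarith [hepspos k]
  exact (convex_ball (0 : ℂ) (c * eps k)).isPreconnected.subset_connectedComponentIn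
    (mem_ball_self (mul_pos hcpos (hepspos k))) hsub
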